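/- Every torsion-free abelian group G admits an archimedean directed compatible order: there exists a partial order ≤ on G such that (i) a ≤ b implies a + c ≤ b + c for all c; (ii) every two elements of G have a common upper bound with respect to ≤; and (iii) for all a, b ∈ G, if n • a ≤ b holds for every integer n, then a = 0. -/

import Mathlib

/-- Every torsion-free abelian group admits an archimedean directed
compatible partial order. -/
theorem stmt3 {G : Type*} [AddCommGroup G]
    (htf : ∀ (n : ℤ) (g : G), n • g = 0 → n ≠ 0 → g = 0) :
    ∃ le : G → G → Prop,
      IsPartialOrder G le ∧
      (∀ a b c : G, le a b → le (a + c) (b + c)) ∧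
      (∀ a b : G, ∃ c : G, le a c ∧ le b c) ∧
      (∀ a b : G, (∀ n : ℤ, le (n • a) b) → a = 0) := by
  classical
  set S := nonZeroDivisors ℤ with hS
  set K := FractionRing ℤ with hK
  let V := LocalizedModule S G
  let f := LocalizedModule.mkLinearMap S G
  -- injectivity at 0
  have hfinj : ∀ g : G, f g = 0 → g = 0 := by
    intro g h
    have h' : LocalizedModule.mk g (1 : S) = LocalizedModule.mk (0 : G) (1 : S) := by
      rw [LocalizedModule.zero_mk]
      exact h
    obtain ⟨u, hu⟩ := LocalizedModule.mk_eq.mp h'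
    refine htf (u : ℤ) g ?_ (nonZeroDivisors.coe_ne_zero u)
    simpa [Submonoid.smul_def] using hu
  -- the range of f spans V over K
  have hspan : Submodule.span K (Set.range f) = ⊤ := by
    rw [Submodule.eq_top_iff']
    intro x
    induction x using LocalizedModule.induction_on with
    | h m s =>
      have hx : LocalizedModule.mk m s
          = (Localization.mk 1 s : K) • LocalizedModule.mk m (1 : S) := by
        rw [LocalizedModule.mk_smul_mk, one_smul, mul_one]
      rw [hx]
      exact Submodule.smul_mem _ _ (Submodule.subset_span ⟨m, rfl⟩)
  obtain ⟨b, hb_sub, hb_span, hb_li⟩ := exists_linearIndependent K (Set.range (f : G → V))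
  rw [hspan] at hb_span
  let B : Module.Basis b K V := Module.Basis.mk hb_li (by rw [Subtype.range_coe]; rw [hb_span])
  have hBapp : ∀ i : b, B i = (i : V) := fun i => Module.Basis.mk_apply _ _ _
  -- preimages of the basis vectors
  have hpre : ∀ i : b, ∃ x : G, f x = (i : V) := fun i => hb_sub i.2
  let g : b → G := fun i => (hpre i).choose
  have hg : ∀ i : b, f (g i) = (i : V) := fun i => (hpre i).choose_spec
  let e : K ≃ₐ[ℤ] ℚ := FractionRing.algEquiv ℤ ℚ
  -- rational coordinates
  let c : G → b → ℚ := fun x i => e (B.repr (f x) i)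
  have hcadd : ∀ x y : G, ∀ i, c (x + y) i = c x i + c y i := by
    intro x y i
    simp only [c, map_add, Finsupp.add_apply]
  have hczero : ∀ i, c 0 i = 0 := by intro i; simp [c]
  have hceq : ∀ x y : G, (∀ i, c x i = c y i) → x = y := by
    intro x y h
    have h0 : ∀ i, c (x - y) i = 0 := by
      intro i
      have := hcadd (x - y) y i
      rw [sub_add_cancel] at this
      rw [h i] at this
      linarith
    have hrepr : B.repr (f (x - y)) = 0 := by
      ext i
      have := h0 i
      have : e (B.repr (f (x - y)) i) = 0 := this
      simpa using (map_eq_zero_iff e e.injective).mp this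
    have : f (x - y) = 0 := by
      have := congrArg B.repr.symm hrepr
      simpa using this
    exact sub_eq_zero.mp (hfinj _ this)
  have hcsmul : ∀ (n : ℤ) (x : G) (i : b), c (n • x) i = (n : ℚ) * c x i := by
    intro n x i
    have h1 : f (n • x) = (n : K) • f x := by
      rw [map_zsmul, Int.cast_smul_eq_zsmul]
    simp only [c, h1, map_smul, Finsupp.smul_apply, smul_eq_mul, map_mul]
    rw [show e ((n : ℤ) : K) = (n : ℚ) from map_intCast e n]
  -- coordinates of the distinguished elements built from basis preimages
  have hcsum : ∀ (s : Finset b) (N : b → ℤ) (j : b),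
      c (∑ i ∈ s, N i • g i) j = if j ∈ s then (N j : ℚ) else 0 := by
    intro s N j
    have h1 : f (∑ i ∈ s, N i • g i) = ∑ i ∈ s, (N i : K) • (B i) := by
      rw [map_sum]
      refine Finset.sum_congr rfl fun i _ => ?_
      rw [map_zsmul, hg i, ← hBapp i, Int.cast_smul_eq_zsmul]
    simp only [c, h1, map_sum, map_smul, Module.Basis.repr_self]
    rw [Finsupp.finset_sum_apply]
    simp only [Finsupp.smul_apply, Finsupp.single_apply, smul_eq_mul, mul_ite, mul_one, mul_zero]
    rw [map_sum]
    simp only [apply_ite e, map_zero]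
    rw [Finset.sum_ite_eq' s j (fun i => e ((N i : ℤ) : K))]
    rw [map_intCast]
  -- support vanishing
  have hcsupp : ∀ (x : G) (j : b), j ∉ (B.repr (f x)).support → c x j = 0 := by
    intro x j hj
    simp only [c, Finsupp.notMem_support_iff.mp hj, map_zero]
  -- the order
  refine ⟨fun x y => ∀ i, c x i ≤ c y i,
    { refl := fun x i => le_rfl,
      trans := fun x y z h1 h2 i => le_trans (h1 i) (h2 i),
      antisymm := fun x y h1 h2 => hceq x y fun i => le_antisymm (h1 i) (h2 i) }, ?_, ?_, ?_⟩
  · intro a b' c' h i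
    rw [hcadd, hcadd]
    exact add_le_add_left (h i) _
  · intro a b'
    set s : Finset b := (B.repr (f a)).support ∪ (B.repr (f b')).support with hs
    set N : b → ℤ := fun i => max 0 ⌈max (c a i) (c b' i)⌉ with hN
    refine ⟨∑ i ∈ s, N i • g i, fun j => ?_, fun j => ?_⟩ <;> rw [hcsum s N j] <;> split_ifs with hj
    · refine le_trans (le_max_left (c a j) (c b' j)) ?_
      calc max (c a j) (c b' j) ≤ (⌈max (c a j) (c b' j)⌉ : ℚ) := Int.le_ceil _
        _ ≤ (N j : ℚ) := by exact_mod_cast Int.cast_le.mpr (le_max_right _ _)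
    · rw [hcsupp a j (fun h => hj (Finset.mem_union_left _ h))]
    · refine le_trans (le_max_right (c a j) (c b' j)) ?_
      calc max (c a j) (c b' j) ≤ (⌈max (c a j) (c b' j)⌉ : ℚ) := Int.le_ceil _
        _ ≤ (N j : ℚ) := by exact_mod_cast Int.cast_le.mpr (le_max_right _ _)
    · rw [hcsupp b' j (fun h => hj (Finset.mem_union_right _ h))]
  · intro a b' h
    refine hceq a 0 fun i => ?_
    rw [hczero]
    by_contra hne
    rcases lt_trichotomy (c a i) 0 with hlt | heq | hgt
    · obtain ⟨n, hn⟩ := exists_int_lt (c b' i / c a i)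
      have h2 := h n i
      rw [hcsmul] at h2
      have : c b' i < (n : ℚ) * c a i := ((lt_div_iff_of_neg hlt).mp hn)
      linarith
    · exact hne heq
    · obtain ⟨n, hn⟩ := exists_int_gt (c b' i / c a i)
      have h2 := h n i
      rw [hcsmul] at h2
      have : c b' i < (n : ℚ) * c a i := (div_lt_iff₀ hgt).mp hn
      linarith
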